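/- Define, for integers n ≥ 3 and 1 ≤ i ≤ n−2, the coefficients α_i = (sin(π/n)/(2cos(π/2n)))·√(1/(sin(iπ/n)·sin((i+1)π/n))), β_i = (−1/(2cos(π/2n)))·√(sin((i+1)π/n)/sin(iπ/n)), γ_i = (1/(2cos(π/2n)))·√(sin(iπ/n)/sin((i+1)π/n)). Then cos(π/2n)·[n + n/(2cos²(π/2n)) + Σ_{i=1}^{n−2}(α_i² + β_i² + γ_i²)] = 2n·cos(π/2n). -/

import Mathlib

open Real Finset

private lemma telescope_aux (g : ℕ → ℝ) : ∀ m : ℕ,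
    ∑ i ∈ Finset.Icc 1 m, (g i - g (i + 1)) = g 1 - g (m + 1)
  | 0 => by simp
  | (m + 1) => by
    rw [Finset.sum_Icc_succ_top (by omega), telescope_aux g m]
    ring

theorem sos_identity_coefficient (n : ℕ) (hn : 3 ≤ n)
    (α β γ : ℕ → ℝ)
    (hα : ∀ i, α i = Real.sin (Real.pi / n) / (2 * Real.cos (Real.pi / (2 * n))) *
      Real.sqrt (1 / (Real.sin (i * Real.pi / n) * Real.sin ((i + 1) * Real.pi / n))))
    (hβ : ∀ i, β i = -1 / (2 * Real.cos (Real.pi / (2 * n))) *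
      Real.sqrt (Real.sin ((i + 1) * Real.pi / n) / Real.sin (i * Real.pi / n)))
    (hγ : ∀ i, γ i = 1 / (2 * Real.cos (Real.pi / (2 * n))) *
      Real.sqrt (Real.sin (i * Real.pi / n) / Real.sin ((i + 1) * Real.pi / n))) :
    Real.cos (Real.pi / (2 * n)) *
      (n + n / (2 * Real.cos (Real.pi / (2 * n)) ^ 2) +
        ∑ i ∈ Finset.Icc 1 (n - 2), (α i ^ 2 + β i ^ 2 + γ i ^ 2)) =
      2 * n * Real.cos (Real.pi / (2 * n)) := by
  have hn0 : (0:ℝ) < n := by exact_mod_cast Nat.lt_of_lt_of_le (by norm_num) hn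
  have hn3 : (3:ℝ) ≤ n := by exact_mod_cast hn
  have hpi := Real.pi_pos
  set c : ℝ := Real.cos (Real.pi / (2 * n)) with hcdef
  have hc : 0 < c := by
    apply Real.cos_pos_of_mem_Ioo
    constructor
    · have : (0:ℝ) < Real.pi / (2 * n) := by positivity
      nlinarith
    · rw [div_lt_div_iff₀ (by positivity) (by norm_num : (0:ℝ) < 2)]
      nlinarith
  -- half-angle: 2 c^2 = 1 + cos (π/n)
  have h2c : 2 * c ^ 2 = 1 + Real.cos (Real.pi / n) := by
    have h := Real.cos_sq (Real.pi / (2 * n))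
    have h' : 2 * (Real.pi / (2 * n)) = Real.pi / n := by
      field_simp
    rw [h'] at h
    rw [hcdef, h]
    ring
  -- positivity of sines
  have hs : ∀ i : ℕ, 1 ≤ i → i ≤ n - 1 → 0 < Real.sin (i * Real.pi / n) := by
    intro i h1 h2
    apply Real.sin_pos_of_pos_of_lt_pi
    · have h1' : (1:ℝ) ≤ i := by exact_mod_cast h1
      positivity
    · rw [div_lt_iff₀ hn0]
      have : (i:ℝ) < n := by exact_mod_cast (by omega : i < n)
      nlinarith
  set g : ℕ → ℝ := fun i =>
    Real.sin (Real.pi / n) * Real.cos (i * Real.pi / n) / Real.sin (i * Real.pi / n) with hg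
  have hterm : ∀ i ∈ Finset.Icc 1 (n - 2),
      α i ^ 2 + β i ^ 2 + γ i ^ 2 =
        (Real.cos (Real.pi / n)) / (2 * c ^ 2) + ((g i - g (i + 1)) / (2 * c ^ 2)) := by
    intro i hi
    simp only [Finset.mem_Icc] at hi
    obtain ⟨h1, h2⟩ := hi
    have hA : 0 < Real.sin (i * Real.pi / n) := hs i h1 (by omega)
    have hB' : 0 < Real.sin ((i + 1 : ℕ) * Real.pi / n) := hs (i + 1) (by omega) (by omega)
    have hcast : ((i + 1 : ℕ) : ℝ) = (i : ℝ) + 1 := by push_cast; ring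
    have hB : 0 < Real.sin (((i : ℝ) + 1) * Real.pi / n) := by rwa [hcast] at hB'
    rw [hα, hβ, hγ, mul_pow, mul_pow, mul_pow,
      Real.sq_sqrt (by positivity),
      Real.sq_sqrt (le_of_lt (div_pos hB hA)),
      Real.sq_sqrt (le_of_lt (div_pos hA hB))]
    simp only [hg]
    rw [hcast]
    set A := Real.sin (i * Real.pi / n) with hAdef
    set CA := Real.cos (i * Real.pi / n) with hCAdef
    set B := Real.sin (((i:ℝ) + 1) * Real.pi / n) with hBdef
    set CB := Real.cos (((i:ℝ) + 1) * Real.pi / n) with hCBdef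
    set s := Real.sin (Real.pi / n) with hsdef
    set ct := Real.cos (Real.pi / n) with hctdef
    have hsplit : ((i : ℝ) + 1) * Real.pi / n = i * Real.pi / n + Real.pi / n := by ring
    have hBx : B = A * ct + CA * s := by rw [hBdef, hsplit, Real.sin_add]
    have hCBx : CB = CA * ct - A * s := by rw [hCBdef, hsplit, Real.cos_add]
    have hpy : A ^ 2 + CA ^ 2 = 1 := by
      rw [hAdef, hCAdef]; exact Real.sin_sq_add_cos_sq _
    have hpy2 : s ^ 2 + ct ^ 2 = 1 := by
      rw [hsdef, hctdef]; exact Real.sin_sq_add_cos_sq _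
    have hCAB : CA * B - CB * A = s := by
      rw [hBx, hCBx]; linear_combination s * hpy
    have hq : A ^ 2 + B ^ 2 = 2 * ct * A * B + s ^ 2 := by
      rw [hBx]; linear_combination s ^ 2 * hpy - A ^ 2 * hpy2
    have hr : s * CA / A - s * CB / B = s * s / (A * B) := by
      rw [div_sub_div _ _ hA.ne' hB.ne']
      rw [show s * CA * B - A * (s * CB) = s * (CA * B - CB * A) by ring, hCAB]
    rw [hr]
    have e1 : (s / (2 * c)) ^ 2 * (1 / (A * B)) + (-1 / (2 * c)) ^ 2 * (B / A) +
        (1 / (2 * c)) ^ 2 * (A / B) = (s ^ 2 + (A ^ 2 + B ^ 2)) / (2 * c ^ 2 * (A * B) * 2) := by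
      field_simp
      ring
    rw [e1, hq]
    field_simp
    ring
  rw [Finset.sum_congr rfl hterm]
  rw [Finset.sum_add_distrib, Finset.sum_const, ← Finset.sum_div, telescope_aux]
  have hcard : (Finset.Icc 1 (n - 2)).card = n - 2 := by
    rw [Nat.card_Icc]
    omega
  have hnm : n - 2 + 1 = n - 1 := by omega
  have hg1 : g 1 = Real.cos (Real.pi / n) := by
    simp only [hg]
    have h1 : ((1 : ℕ) : ℝ) * Real.pi / n = Real.pi / n := by push_cast; ring
    have hspos : 0 < Real.sin (Real.pi / n) := by
      have := hs 1 le_rfl (by omega)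
      rwa [h1] at this
    rw [h1]
    field_simp
  have hgn : g (n - 1) = -Real.cos (Real.pi / n) := by
    simp only [hg]
    have hne : ((n - 1 : ℕ) : ℝ) * Real.pi / n = Real.pi - Real.pi / n := by
      have hc1 : ((n - 1 : ℕ) : ℝ) = (n : ℝ) - 1 := by
        push_cast [Nat.cast_sub (by omega : 1 ≤ n)]; ring
      rw [hc1]
      field_simp
    have hspos : 0 < Real.sin (Real.pi / n) := by
      have h1 : ((1 : ℕ) : ℝ) * Real.pi / n = Real.pi / n := by push_cast; ring
      have := hs 1 le_rfl (by omega)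
      rwa [h1] at this
    rw [hne, Real.sin_pi_sub, Real.cos_pi_sub]
    field_simp
  rw [hnm, hcard, hg1, hgn]
  have hcard' : ((n - 2 : ℕ) : ℝ) = (n : ℝ) - 2 := by
    push_cast [Nat.cast_sub (by omega : 2 ≤ n)]; ring
  rw [nsmul_eq_mul, hcard']
  field_simp
  linear_combination (-(n:ℝ)) * h2c
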